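/- Let Σ_n = (K_n, σ) be a doubly signed complete graph and let v be a vertex such that every edge incident with v has label 0 ∈ F. If the complete graph K_n − v on the remaining vertices contains a (simple) path whose edges realize all four elements of F as labels, then for every g ∈ F there exists a Hamiltonian circle of Σ_n with double sign g. -/

import Mathlib

/-- The Klein four-group, written additively. -/
abbrev F : Type := ZMod 2 × ZMod 2

/-- The double sign of the triangle spanned by three vertices. -/
def triSign {n : ℕ} (σ : Sym2 (Fin n) → F) (a b c : Fin n) : F :=
  σ s(a, b) + σ s(b, c) + σ s(a, c)

/-- The double sign of a walk: the sum of the labels of its edges. -/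
def walkSign {n : ℕ} (σ : Sym2 (Fin n) → F) {u v : Fin n}
    (w : (⊤ : SimpleGraph (Fin n)).Walk u v) : F :=
  (w.edges.map σ).sum

open SimpleGraph

/-- Sum of labels of consecutive pairs of a list. -/
def signOfList {n : ℕ} (σ : Sym2 (Fin n) → F) : List (Fin n) → F
  | a :: b :: l => σ s(a, b) + signOfList σ (b :: l)
  | _ => 0

/-- Edges of consecutive pairs of a list. -/
def edgesOfList {n : ℕ} : List (Fin n) → List (Sym2 (Fin n))
  | a :: b :: l => s(a, b) :: edgesOfList (b :: l)
  | _ => []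

lemma edges_eq_edgesOfList {n : ℕ} {u t : Fin n}
    (w : (⊤ : SimpleGraph (Fin n)).Walk u t) : w.edges = edgesOfList w.support := by
  induction w with
  | nil => simp [edgesOfList]
  | cons h p ih =>
    rw [Walk.edges_cons, Walk.support_cons, ih, p.support_eq_cons]
    simp [edgesOfList]

lemma walkSign_eq_signOfList {n : ℕ} (σ : Sym2 (Fin n) → F) {u t : Fin n}
    (w : (⊤ : SimpleGraph (Fin n)).Walk u t) : walkSign σ w = signOfList σ w.support := by
  induction w with
  | nil => simp [walkSign, signOfList]
  | cons h p ih =>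
    rw [Walk.support_cons, p.support_eq_cons]
    simp only [signOfList, ← p.support_eq_cons, ← ih]
    simp [walkSign, Walk.edges_cons]

lemma signOfList_append {n : ℕ} (σ : Sym2 (Fin n) → F) (A : List (Fin n)) (m : Fin n)
    (B : List (Fin n)) :
    signOfList σ (A ++ m :: B) = signOfList σ (A ++ [m]) + signOfList σ (m :: B) := by
  induction A with
  | nil => simp [signOfList]
  | cons a A ih =>
    cases A with
    | nil => simp [signOfList]
    | cons a' A' =>
      simp only [List.cons_append, List.append_eq, signOfList] at ih ⊢
      rw [ih]; abel

lemma mem_edgesOfList {n : ℕ} {e : Sym2 (Fin n)} :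
    ∀ {L : List (Fin n)}, e ∈ edgesOfList L →
      ∃ (A : List (Fin n)) (x y : Fin n) (B : List (Fin n)), L = A ++ x :: y :: B ∧ e = s(x, y)
  | [], h => by simp [edgesOfList] at h
  | [a], h => by simp [edgesOfList] at h
  | a :: b :: L, h => by
    simp only [edgesOfList, List.mem_cons] at h
    rcases h with h | h
    · exact ⟨[], a, b, L, rfl, h⟩
    · obtain ⟨A, x, y, B, hL, he⟩ := mem_edgesOfList h
      exact ⟨a :: A, x, y, B, by rw [List.cons_append, ← hL], he⟩

lemma walkOfList_aux {n : ℕ} :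
    ∀ (l : List (Fin n)) (u t : Fin n), (u :: (l ++ [t])).Chain' (· ≠ ·) →
      ∃ w : (⊤ : SimpleGraph (Fin n)).Walk u t, w.support = u :: (l ++ [t])
  | [], u, t, h => by
    refine ⟨Walk.cons (by simpa using (List.isChain_cons_cons.mp h).1) Walk.nil, ?_⟩
    simp
  | x :: l, u, t, h => by
    obtain ⟨w, hw⟩ := walkOfList_aux l x t (List.isChain_cons_cons.mp h).2
    refine ⟨Walk.cons (by simpa using (List.isChain_cons_cons.mp h).1) w, ?_⟩
    simp [hw]

lemma head?_append_cons {α : Type*} (A : List α) (x : α) (l l' : List α) :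
    (A ++ x :: l).head? = (A ++ x :: l').head? := by cases A <;> simp

/-- Main construction: from a list of all vertices, a Hamiltonian cycle
with the corresponding sign. -/
lemma cycleOfList {n : ℕ} (σ : Sym2 (Fin n) → F) (a x : Fin n) (rest : List (Fin n))
    (hnd : (a :: x :: rest).Nodup) (hne : rest ≠ [])
    (hcov : ∀ z : Fin n, z ∈ a :: x :: rest) :
    ∃ (u : Fin n) (w : (⊤ : SimpleGraph (Fin n)).Walk u u),
      w.IsHamiltonianCycle ∧ walkSign σ w = signOfList σ ((a :: x :: rest) ++ [a]) := by
  have hndL : (x :: rest ++ [a]).Nodup := by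
    have := (List.nodup_middle (a := a) (l₁ := x :: rest) (l₂ := [])).mpr (by simpa using hnd)
    simpa using this
  have hch : ((x :: rest) ++ [a]).Chain' (· ≠ ·) := List.Pairwise.isChain hndL
  obtain ⟨P, hPs⟩ := walkOfList_aux rest x a (by simpa using hch)
  have hax : a ≠ x := by
    intro hc; subst hc; simp at hnd
  have hPpath : P.IsPath := by
    rw [Walk.isPath_def, hPs]; simpa using hndL
  have hnotmem : s(a, x) ∉ P.edges := by
    rw [edges_eq_edgesOfList, hPs]
    intro hmem
    obtain ⟨A, cc, d, B, hL, he⟩ := mem_edgesOfList hmem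
    rcases Sym2.eq_iff.mp he with ⟨rfl, rfl⟩ | ⟨rfl, rfl⟩
    · -- hL : x :: (rest ++ [a]) = A ++ a :: x :: B, but a is the last element
      have h1 : (x :: (rest ++ [a])).getLast? = some a := by
        rw [show x :: (rest ++ [a]) = (x :: rest) ++ [a] by simp]
        exact List.getLast?_concat
      have h2 : (A ++ a :: x :: B).getLast? = some ((x :: B).getLast (by simp)) := by
        rw [show A ++ a :: x :: B = (A ++ [a]) ++ (x :: B) by simp, List.getLast?_append,
          List.getLast?_eq_getLast (l := x :: B) (by simp)]
        rfl
      rw [hL, h2] at h1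
      have hmem2 : a ∈ x :: B := by
        rw [Option.some_inj.mp h1.symm] at *
        exact List.getLast_mem _
      have hnd3 : (a :: x :: B).Nodup := by
        have := hndL
        rw [show (x :: rest ++ [a]) = A ++ a :: x :: B by simpa using hL] at this
        exact this.of_append_right
      simp only [List.nodup_cons] at hnd3
      exact hnd3.1 hmem2
    · -- hL : x :: (rest ++ [a]) = A ++ x :: a :: B
      cases A with
      | nil =>
        simp only [List.nil_append] at hL
        obtain ⟨-, hL2⟩ := List.cons_eq_cons.mp hL
        obtain ⟨r0, rest', hrest⟩ := List.exists_cons_of_ne_nil hne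
        rw [hrest, List.cons_append] at hL2
        obtain ⟨hr0, -⟩ := List.cons_eq_cons.mp hL2
        rw [hrest, hr0] at hnd
        simp at hnd
      | cons a1 A' =>
        rw [List.cons_append] at hL
        obtain ⟨ha1x, hL2⟩ := List.cons_eq_cons.mp hL
        have hx : x ∈ rest ++ [a] := by rw [hL2]; simp
        have h2 := hndL
        simp only [List.cons_append, List.nodup_cons] at h2
        exact h2.1 hx
  refine ⟨a, Walk.cons (by simpa using hax) P, ?_, ?_⟩
  · rw [Walk.isHamiltonianCycle_iff_isCycle_and_support_count_tail_eq_one]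
    constructor
    · exact (Walk.cons_isCycle_iff P _).mpr ⟨hPpath, hnotmem⟩
    · intro z
      rw [Walk.support_cons, List.tail_cons, hPs]
      refine List.count_eq_one_of_mem (by simpa using hndL) ?_
      rcases List.mem_cons.mp (hcov z) with rfl | h
      · simp
      · simp only [List.cons_append, List.mem_cons, List.mem_append] at h ⊢
        tauto
  · rw [walkSign_eq_signOfList, Walk.support_cons, hPs]
    simp

lemma exists_three_split {α : Type*} (L : List α) (h : 3 ≤ L.length) :
    ∃ (a x : α) (r : List α), L = a :: x :: r ∧ r ≠ [] :=
  match L, h with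
  | [], h => by simp at h
  | [a], h => by simp at h
  | [a, b], h => by simp at h
  | a :: x :: c :: r, _ => ⟨a, x, c :: r, rfl, by simp⟩

theorem stmt7 (n : ℕ) (σ : Sym2 (Fin n) → F) (v : Fin n)
    (hv : ∀ u : Fin n, u ≠ v → σ s(v, u) = 0)
    (hpath : ∃ (a b : Fin n) (p : (⊤ : SimpleGraph (Fin n)).Walk a b),
      p.IsPath ∧ v ∉ p.support ∧ ∀ g : F, ∃ e ∈ p.edges, σ e = g) :
    ∀ g : F, ∃ (u : Fin n) (w : (⊤ : SimpleGraph (Fin n)).Walk u u),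
      w.IsHamiltonianCycle ∧ walkSign σ w = g := by
  obtain ⟨a, b, p, hp, hvp, hall⟩ := hpath
  intro g
  classical
  set R : List (Fin n) :=
    (List.finRange n).filter (fun z => decide (z ∉ p.support ∧ z ≠ v)) with hRdef
  have hRmem : ∀ z : Fin n, z ∈ R ↔ (z ∉ p.support ∧ z ≠ v) := by
    intro z
    simp [hRdef, List.mem_filter]
  have hRnd : R.Nodup := (List.nodup_finRange n).filter _
  set b0 : Fin n := p.support.getLast p.support_ne_nil with hb0
  set c : F := signOfList σ (b0 :: (R ++ [a])) with hc
  set T : F := walkSign σ p with hT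
  obtain ⟨e, heE, heσ⟩ := hall (T + c - g)
  rw [edges_eq_edgesOfList] at heE
  obtain ⟨A, x', y, B, hsup, rfl⟩ := mem_edgesOfList heE
  have hnds : p.support.Nodup := hp.support_nodup
  have hx'v : x' ≠ v := by
    intro hc2; apply hvp; rw [← hc2, hsup]; simp
  have hyv : y ≠ v := by
    intro hc2; apply hvp; rw [← hc2, hsup]; simp
  have hperm : (A ++ x' :: v :: y :: (B ++ R)).Perm (p.support ++ v :: R) := by
    have h1 : (B ++ v :: R).Perm (v :: (B ++ R)) := List.perm_middle
    have h2 : (v :: y :: (B ++ R)).Perm (y :: (B ++ v :: R)) :=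
      ((List.Perm.swap y v _).trans (h1.symm.cons y)).symm.symm
    have h3 : (x' :: v :: y :: (B ++ R)).Perm (x' :: y :: (B ++ v :: R)) := h2.cons x'
    have h4 := h3.append_left A
    rw [hsup]
    refine h4.trans (List.Perm.of_eq ?_)
    simp
  have hnd2 : (p.support ++ v :: R).Nodup := by
    rw [List.nodup_append]
    refine ⟨hnds, ?_, ?_⟩
    · rw [List.nodup_cons]
      exact ⟨fun hc2 => ((hRmem v).mp hc2).2 rfl, hRnd⟩
    · intro z hz b hb hzb
      subst hzb
      simp only [List.mem_cons] at hb
      rcases hb with rfl | hzr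
      · exact hvp hz
      · exact ((hRmem z).mp hzr).1 hz
  have hndC : (A ++ x' :: v :: y :: (B ++ R)).Nodup := hperm.nodup_iff.mpr hnd2
  have hcovC : ∀ z : Fin n, z ∈ A ++ x' :: v :: y :: (B ++ R) := by
    intro z
    rw [hperm.mem_iff]
    by_cases h1 : z ∈ p.support
    · simp [h1]
    · by_cases h2 : z = v
      · simp [h2]
      · have : z ∈ R := (hRmem z).mpr ⟨h1, h2⟩
        simp [this]
  have hlen : 3 ≤ (A ++ x' :: v :: y :: (B ++ R)).length := by
    simp only [List.length_append, List.length_cons]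
    omega
  obtain ⟨a1, x1, rest, hC, hrne⟩ := exists_three_split _ hlen
  obtain ⟨u, w, hham, hsign⟩ :=
    cycleOfList σ a1 x1 rest (hC ▸ hndC) hrne (fun z => hC ▸ hcovC z)
  refine ⟨u, w, hham, ?_⟩
  rw [hsign]
  -- identify a1 with a
  have ha1 : a1 = a := by
    have h1 : (A ++ x' :: v :: y :: (B ++ R)).head? = some a1 := by rw [hC]; rfl
    have h2 : (A ++ x' :: v :: y :: (B ++ R)).head? = some a := by
      rw [head?_append_cons A x' _ (y :: B), ← hsup, p.support_eq_cons]
      rfl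
    rw [h1] at h2
    exact Option.some_inj.mp h2
  rw [← hC, ha1]
  -- now compute the sign
  have hb0' : b0 = (y :: B).getLast (by simp) := by
    rw [hb0]
    have hs2 : p.support = (A ++ [x']) ++ (y :: B) := by rw [hsup]; simp
    simp only [hs2]
    rw [List.getLast_append_right (by simp)]
  have key : (A ++ x' :: v :: y :: (B ++ R)) ++ [a]
      = A ++ x' :: (v :: y :: (B ++ (R ++ [a]))) := by simp
  rw [key, signOfList_append σ A x']
  have expand : signOfList σ (x' :: v :: y :: (B ++ (R ++ [a])))
      = σ s(x', v) + (σ s(v, y) + signOfList σ (y :: (B ++ (R ++ [a])))) := by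
    simp [signOfList]
  rw [expand]
  have hxv0 : σ s(x', v) = 0 := by rw [Sym2.eq_swap]; exact hv x' hx'v
  have hvy0 : σ s(v, y) = 0 := hv y hyv
  rw [hxv0, hvy0]
  have hsplitYB : (y :: B) = (y :: B).dropLast ++ [b0] := by
    rw [hb0']; exact (List.dropLast_append_getLast _).symm
  have htail : signOfList σ (y :: (B ++ (R ++ [a])))
      = signOfList σ (y :: B) + c := by
    have h1 : y :: (B ++ (R ++ [a])) = ((y :: B).dropLast) ++ (b0 :: (R ++ [a])) := by
      conv_lhs => rw [show y :: (B ++ (R ++ [a])) = (y :: B) ++ (R ++ [a]) by simp,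
        hsplitYB]
      simp
    rw [h1, signOfList_append σ _ b0, ← hsplitYB, hc]
  rw [htail]
  have hTexp : T = signOfList σ (A ++ [x']) + (σ s(x', y) + signOfList σ (y :: B)) := by
    rw [hT, walkSign_eq_signOfList, hsup, signOfList_append σ A x']
    simp [signOfList]
  rw [heσ] at hTexp
  linear_combination -hTexp
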